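/- arXiv:2010.12756 — 3 statements merged into one kernel-verified Lean document; each statement's English description precedes it below -/
import Mathlib

section
/- If A and B are bounded normal operators on a complex Hilbert space, then ω(A + B) ≤ √2 · ω(|A| + i|B|), where ω is the numerical radius. -/
open scoped InnerProductSpace
open ContinuousLinearMap

variable {H : Type*} [NormedAddCommGroup H] [InnerProductSpace ℂ H] [CompleteSpace H]

/-- The numerical radius of a bounded operator. -/
noncomputable def numRadius (T : H →L[ℂ] H) : ℝ :=
  ⨆ x : {x : H // ‖x‖ = 1}, ‖⟪T x.1, x.1⟫_ℂ‖

/-- The absolute value |A| = (A*A)^(1/2). -/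
noncomputable def opAbs (A : H →L[ℂ] H) : H →L[ℂ] H := CFC.sqrt (adjoint A * A)

/-- Real part of the Cartesian decomposition. -/
noncomputable def reP (T : H →L[ℂ] H) : H →L[ℂ] H := (2:ℂ)⁻¹ • (T + adjoint T)

/-- Imaginary part of the Cartesian decomposition. -/
noncomputable def imP (T : H →L[ℂ] H) : H →L[ℂ] H := (2*Complex.I:ℂ)⁻¹ • (T - adjoint T)

lemma sq_trick (T : H →L[ℂ] H) (x : H) : 0 ≤ (⟪(adjoint T * T) x, x⟫_ℂ).re := by
  rw [ContinuousLinearMap.mul_apply, ContinuousLinearMap.adjoint_inner_left,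
    inner_self_eq_norm_sq_to_K]
  simp [← Complex.ofReal_pow]

lemma cfc_real_factor (A : H →L[ℂ] H) [IsStarNormal A] (g : ℂ → ℝ) (hg : Continuous g)
    (hg0 : ∀ z, 0 ≤ g z) :
    cfc (fun z => (g z : ℂ)) A
      = adjoint (cfc (fun z => (Real.sqrt (g z) : ℂ)) A) * cfc (fun z => (Real.sqrt (g z) : ℂ)) A := by
  conv_rhs => rw [← ContinuousLinearMap.star_eq_adjoint, ← cfc_star]
  rw [← cfc_mul _ _ A (by fun_prop) (by fun_prop)]
  apply cfc_congr
  intro z _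
  simp [← Complex.ofReal_mul, Real.mul_self_sqrt (hg0 z)]

lemma cfc_real_nonneg (A : H →L[ℂ] H) [IsStarNormal A] (g : ℂ → ℝ) (hg : Continuous g)
    (hg0 : ∀ z, 0 ≤ g z) (x : H) : 0 ≤ (⟪cfc (fun z => (g z : ℂ)) A x, x⟫_ℂ).re := by
  rw [cfc_real_factor A g hg hg0]; exact sq_trick _ x

lemma cfc_real_selfAdjoint (A : H →L[ℂ] H) [IsStarNormal A] (g : ℂ → ℝ) :
    IsSelfAdjoint (cfc (fun z => (g z : ℂ)) A) := by
  rw [IsSelfAdjoint, ← cfc_star]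
  apply cfc_congr; intro z _; simp

lemma opAbs_eq (A : H →L[ℂ] H) [IsStarNormal A] :
    opAbs A = cfc (fun z => (‖z‖ : ℂ)) A := by
  unfold opAbs
  refine CFC.sqrt_unique (a := adjoint A * A) (b := cfc (fun z => (‖z‖ : ℂ)) A) ?_ ?_
  · rw [← cfc_mul _ _ A (by fun_prop) (by fun_prop)]
    conv_rhs => rw [← ContinuousLinearMap.star_eq_adjoint, ← cfc_id ℂ A, ← cfc_star]
    rw [← cfc_mul _ _ A (by fun_prop) (by fun_prop)]
    apply cfc_congr
    intro z _
    simp only [_root_.id, RCLike.star_def, RCLike.conj_mul]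
    norm_cast
    exact congrArg _ (sq ‖z‖).symm
  · rw [ContinuousLinearMap.nonneg_iff_isPositive]
    refine ⟨ContinuousLinearMap.isSelfAdjoint_iff_isSymmetric.mp (cfc_real_selfAdjoint A (fun z => ‖z‖)), fun x => ?_⟩
    exact cfc_real_nonneg A _ continuous_norm (fun z => norm_nonneg z) x

lemma key_ineq (A : H →L[ℂ] H) [IsStarNormal A] (x : H) :
    ‖⟪A x, x⟫_ℂ‖ ≤ (⟪cfc (fun z => (‖z‖ : ℂ)) A x, x⟫_ℂ).re := by
  set w := ⟪A x, x⟫_ℂ with hw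
  by_cases hw0 : w = 0
  · rw [hw0]
    simpa using cfc_real_nonneg A _ continuous_norm (fun z => norm_nonneg z) x
  set c : ℂ := w / ‖w‖ with hc
  have hnw : ((‖w‖ : ℝ) : ℂ) ≠ 0 := by
    simpa using hw0
  have hcw : (starRingEnd ℂ) c * w = (‖w‖ : ℂ) := by
    rw [hc, map_div₀, Complex.conj_ofReal, div_mul_eq_mul_div, RCLike.conj_mul]
    rw [sq]
    field_simp
    norm_cast
  have hc1 : ‖c‖ = 1 := by
    rw [hc]
    simp [norm_div, hw0, norm_ne_zero_iff]
  have h2 : (starRingEnd ℂ) (2⁻¹ : ℂ) = 2⁻¹ := by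
    simp [map_inv₀, Complex.ext_iff]
  have hcoe : ∀ u : ℂ, ((u.re : ℝ) : ℂ) = 2⁻¹*u + (starRingEnd ℂ) (2⁻¹*u) := by
    intro u
    rw [map_mul, h2, ← mul_add, Complex.add_conj]
    push_cast
    ring
  have cont2 : ContinuousOn (fun z : ℂ => (starRingEnd ℂ) (2⁻¹*(c*z))) (spectrum ℂ A) :=
    (Complex.continuous_conj.comp (by fun_prop)).continuousOn
  -- decomposition
  have hdecomp : cfc (fun z => (‖z‖ : ℂ)) A
      = cfc (fun z => ((‖z‖ - (c*z).re : ℝ) : ℂ)) A + cfc (fun z => (((c*z).re : ℝ) : ℂ)) A := by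
    rw [← cfc_add (a := A) _ _ (by fun_prop) (by fun_prop)]
    apply cfc_congr
    intro z _
    push_cast
    ring
  have hpart1 : cfc (fun z : ℂ => 2⁻¹*(c*z)) A = ((2:ℂ)⁻¹*c) • A := by
    rw [← cfc_const_mul_id ((2:ℂ)⁻¹*c) A]
    apply cfc_congr
    intro z _
    dsimp only
    ring
  have hpart2 : cfc (fun z : ℂ => (starRingEnd ℂ) (2⁻¹*(c*z))) A = star (((2:ℂ)⁻¹*c) • A) := by
    rw [← cfc_const_mul_id ((2:ℂ)⁻¹*c) A, ← cfc_star]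
    apply cfc_congr
    intro z _
    dsimp only
    rw [Complex.star_def]
    exact congrArg _ (by ring)
  have hR : cfc (fun z => (((c*z).re : ℝ) : ℂ)) A = ((2:ℂ)⁻¹*c) • A + star (((2:ℂ)⁻¹*c) • A) := by
    have h1 : cfc (fun z => (((c*z).re : ℝ) : ℂ)) A
        = cfc (fun z => 2⁻¹*(c*z) + (starRingEnd ℂ) (2⁻¹*(c*z))) A :=
      cfc_congr fun z _ => hcoe (c*z)
    rw [h1, cfc_add (a := A) _ _ (by fun_prop) cont2, hpart1, hpart2]
  have hg0 : ∀ z : ℂ, 0 ≤ ‖z‖ - (c*z).re := by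
    intro z
    have h := Complex.re_le_norm (c*z)
    rw [norm_mul, hc1, one_mul] at h
    linarith
  have hpos := cfc_real_nonneg A (fun z => ‖z‖ - (c*z).re) (by fun_prop) hg0 x
  have hRval : (⟪(((2:ℂ)⁻¹*c) • A + star (((2:ℂ)⁻¹*c) • A)) x, x⟫_ℂ).re = ‖w‖ := by
    rw [ContinuousLinearMap.add_apply, inner_add_left]
    have hstar : ⟪(star (((2:ℂ)⁻¹*c) • A)) x, x⟫_ℂ
        = (starRingEnd ℂ) ⟪(((2:ℂ)⁻¹*c) • A) x, x⟫_ℂ := by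
      rw [ContinuousLinearMap.star_eq_adjoint, ContinuousLinearMap.adjoint_inner_left,
        ← inner_conj_symm]
    rw [hstar, Complex.add_conj]
    rw [ContinuousLinearMap.smul_apply, inner_smul_left, ← hw]
    have h3 : (starRingEnd ℂ) ((2:ℂ)⁻¹*c) * w = (2:ℂ)⁻¹ * ((‖w‖ : ℝ) : ℂ) := by
      rw [map_mul, mul_assoc, hcw, h2]
    rw [h3]
    simp only [Complex.mul_re, Complex.ofReal_re, Complex.ofReal_im]
    have h4 : ((2:ℂ)⁻¹).re = 2⁻¹ ∧ ((2:ℂ)⁻¹).im = 0 := by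
      norm_num [Complex.ext_iff]
    rw [h4.1, h4.2]
    ring
  calc ‖w‖
      = (⟪cfc (fun z => ((‖z‖ - (c*z).re : ℝ) : ℂ)) A x, x⟫_ℂ).re
        + ‖w‖ - (⟪cfc (fun z => ((‖z‖ - (c*z).re : ℝ) : ℂ)) A x, x⟫_ℂ).re := by ring
    _ ≤ _ := by
        rw [hdecomp, ContinuousLinearMap.add_apply, inner_add_left, Complex.add_re, hR, hRval]
        linarith

lemma scalar_ineq (a b : ℝ) (ha : 0 ≤ a) (hb : 0 ≤ b) :
    a + b ≤ Real.sqrt 2 * Real.sqrt (a^2 + b^2) := by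
  rw [← Real.sqrt_mul (by norm_num)]
  rw [show a + b = Real.sqrt ((a+b)^2) from (Real.sqrt_sq (by linarith)).symm]
  apply Real.sqrt_le_sqrt
  nlinarith [sq_nonneg (a-b)]

lemma bdd_range (T : H →L[ℂ] H) :
    BddAbove (Set.range fun x : {x : H // ‖x‖ = 1} => ‖⟪T x.1, x.1⟫_ℂ‖) := by
  refine ⟨‖T‖, ?_⟩
  rintro _ ⟨x, rfl⟩
  calc ‖⟪T x.1, x.1⟫_ℂ‖ = ‖⟪T x.1, x.1⟫_ℂ‖ := rfl
    _ ≤ ‖T x.1‖ * ‖x.1‖ := norm_inner_le_norm _ _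
    _ ≤ (‖T‖ * ‖x.1‖) * ‖x.1‖ := by
        gcongr
        exact T.le_opNorm x.1
    _ = ‖T‖ := by rw [x.2]; ring

lemma inner_selfAdjoint_real (S : H →L[ℂ] H) (hS : IsSelfAdjoint S) (x : H) :
    ⟪S x, x⟫_ℂ = ((⟪S x, x⟫_ℂ).re : ℂ) := by
  have : (starRingEnd ℂ) ⟪S x, x⟫_ℂ = ⟪S x, x⟫_ℂ := by
    conv_rhs => rw [← hS.star_eq]
    rw [ContinuousLinearMap.star_eq_adjoint, ContinuousLinearMap.adjoint_inner_left,
      ← inner_conj_symm, Complex.conj_conj]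
  exact (Complex.conj_eq_iff_re.mp this).symm

theorem stmt_8 (A B : H →L[ℂ] H) (hA : A * adjoint A = adjoint A * A)
    (hB : B * adjoint B = adjoint B * B) :
    numRadius (A + B) ≤ Real.sqrt 2 * numRadius (opAbs A + Complex.I • opAbs B) := by
  have hAn : IsStarNormal A := ⟨by rw [commute_iff_eq, ContinuousLinearMap.star_eq_adjoint]; exact hA.symm⟩
  have hBn : IsStarNormal B := ⟨by rw [commute_iff_eq, ContinuousLinearMap.star_eq_adjoint]; exact hB.symm⟩
  set T := opAbs A + Complex.I • opAbs B with hT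
  have hAsa : IsSelfAdjoint (opAbs A) := by rw [opAbs_eq A]; exact cfc_real_selfAdjoint A _
  have hBsa : IsSelfAdjoint (opAbs B) := by rw [opAbs_eq B]; exact cfc_real_selfAdjoint B _
  have key : ∀ x : H, ‖⟪(A+B) x, x⟫_ℂ‖ ≤ Real.sqrt 2 * ‖⟪T x, x⟫_ℂ‖ := by
    intro x
    set a := (⟪opAbs A x, x⟫_ℂ).re with ha
    set b := (⟪opAbs B x, x⟫_ℂ).re with hb
    have ha0 : 0 ≤ a := by
      rw [ha, opAbs_eq A]
      exact cfc_real_nonneg A _ continuous_norm (fun z => norm_nonneg z) x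
    have hb0 : 0 ≤ b := by
      rw [hb, opAbs_eq B]
      exact cfc_real_nonneg B _ continuous_norm (fun z => norm_nonneg z) x
    have hTval : ⟪T x, x⟫_ℂ = (a : ℂ) - (b : ℂ) * Complex.I := by
      rw [hT, ContinuousLinearMap.add_apply, inner_add_left, ContinuousLinearMap.smul_apply,
        inner_smul_left, inner_selfAdjoint_real _ hAsa, inner_selfAdjoint_real _ hBsa]
      simp [Complex.conj_I, ← ha, ← hb]
      ring
    have hTabs : ‖⟪T x, x⟫_ℂ‖ = Real.sqrt (a^2 + b^2) := by
      rw [hTval]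
      rw [show ((a : ℂ) - (b : ℂ) * Complex.I) = ((a : ℝ) : ℂ) + ((-b : ℝ) : ℂ) * Complex.I by
        push_cast; ring]
      rw [Complex.norm_add_mul_I]
      norm_num
    calc ‖⟪(A+B) x, x⟫_ℂ‖ ≤ ‖⟪A x, x⟫_ℂ‖ + ‖⟪B x, x⟫_ℂ‖ := by
          rw [ContinuousLinearMap.add_apply, inner_add_left]
          exact norm_add_le _ _
      _ ≤ a + b := by
          have h1 := key_ineq A x
          have h2 := key_ineq B x
          rw [← opAbs_eq A] at h1
          rw [← opAbs_eq B] at h2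
          exact add_le_add h1 h2
      _ ≤ Real.sqrt 2 * Real.sqrt (a^2 + b^2) := scalar_ineq a b ha0 hb0
      _ = Real.sqrt 2 * ‖⟪T x, x⟫_ℂ‖ := by rw [hTabs]
  rcases isEmpty_or_nonempty {x : H // ‖x‖ = 1} with hE | hNE
  · unfold numRadius
    rw [Real.iSup_of_isEmpty, Real.iSup_of_isEmpty]
    norm_num
  · unfold numRadius
    apply ciSup_le
    intro x
    calc ‖⟪(A+B) x.1, x.1⟫_ℂ‖ ≤ Real.sqrt 2 * ‖⟪T x.1, x.1⟫_ℂ‖ := key x.1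
      _ ≤ Real.sqrt 2 * ⨆ y : {x : H // ‖x‖ = 1}, ‖⟪T y.1, y.1⟫_ℂ‖ := by
          apply mul_le_mul_of_nonneg_left _ (Real.sqrt_nonneg 2)
          exact le_ciSup (bdd_range T) x
end

section
/- If S and T are bounded accretive-dissipative operators on a complex Hilbert space, then ω(ST) ≤ 2 ω(S) ω(T). -/
open scoped InnerProductSpace
open ContinuousLinearMap

variable {H : Type*} [NormedAddCommGroup H] [InnerProductSpace ℂ H] [CompleteSpace H]

lemma posInnerReal (A : H →L[ℂ] H) (hA : A.IsPositive) (z : H) :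
    ⟪A z, z⟫_ℂ = ((⟪A z, z⟫_ℂ).re : ℂ) := by
  have hsym := ContinuousLinearMap.isSelfAdjoint_iff_isSymmetric.mp hA.isSelfAdjoint
  have hco : (starRingEnd ℂ) ⟪A z, z⟫_ℂ = ⟪A z, z⟫_ℂ := by
    rw [inner_conj_symm]; exact (hsym z z).symm
  have him : (⟪A z, z⟫_ℂ).im = 0 := by
    have h := congrArg Complex.im hco
    rw [Complex.conj_im] at h
    linarith
  exact Complex.ext (by simp) (by simp [him])

lemma posCS (A : H →L[ℂ] H) (hA : A.IsPositive) (x y : H) :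
    (‖⟪A x, y⟫_ℂ‖)^2 ≤ (⟪A x, x⟫_ℂ).re * (⟪A y, y⟫_ℂ).re := by
  have hsym := ContinuousLinearMap.isSelfAdjoint_iff_isSymmetric.mp hA.isSelfAdjoint
  set p : ℂ := ⟪A x, y⟫_ℂ with hp
  set q : ℝ := (‖p‖)^2 with hq
  set a : ℝ := (⟪A x, x⟫_ℂ).re with hharta
  set c : ℝ := (⟪A y, y⟫_ℂ).re with hhartc
  have ha : 0 ≤ a := hA.re_inner_nonneg_left x
  have hc : 0 ≤ c := hA.re_inner_nonneg_left y
  have habs : 0 ≤ q := sq_nonneg _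
  have hyx : ⟪A y, x⟫_ℂ = (starRingEnd ℂ) p := by
    rw [hp, ← inner_conj_symm]
    congr 1
    exact (hsym x y).symm
  have key : ∀ s : ℝ, 0 ≤ a - 2 * s * q + s^2 * q * c := by
    intro s
    set t : ℂ := -(s:ℂ) * (starRingEnd ℂ) p with ht
    have h0 : (0:ℝ) ≤ (⟪A (x + t • y), x + t • y⟫_ℂ).re := by
      have := hA.re_inner_nonneg_left (x + t • y)
      exact this
    have hexp : ⟪A (x + t • y), x + t • y⟫_ℂ
        = ⟪A x, x⟫_ℂ + t * p + (starRingEnd ℂ) t * (starRingEnd ℂ) p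
          + (starRingEnd ℂ) t * t * ⟪A y, y⟫_ℂ := by
      simp only [map_add, map_smul, inner_add_left, inner_add_right, inner_smul_left,
        inner_smul_right, hyx, ← hp]
      ring
    rw [hexp] at h0
    have h1 : (t * p).re = -s * q := by
      have : t * p = -(s:ℂ) * ((q : ℝ) : ℂ) := by
        rw [ht, mul_assoc]
        congr 1
        rw [← Complex.normSq_eq_conj_mul_self, hq, Complex.sq_norm]
      rw [this]
      simp
    have h2 : ((starRingEnd ℂ) t * (starRingEnd ℂ) p).re = -s * q := by
      rw [← map_mul, Complex.conj_re, h1]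
    have h3 : ((starRingEnd ℂ) t * t * ⟪A y, y⟫_ℂ).re = s^2 * q * c := by
      have htt : (starRingEnd ℂ) t * t = ((s^2 * q : ℝ) : ℂ) := by
        rw [← Complex.normSq_eq_conj_mul_self, ht, hq, Complex.sq_norm]
        push_cast [Complex.normSq_mul, Complex.normSq_conj, Complex.normSq_neg,
          Complex.normSq_ofReal]
        ring
      rw [htt, posInnerReal A hA y]
      simp only [← Complex.ofReal_mul, Complex.ofReal_re]
      rfl
    simp only [Complex.add_re, h1, h2, h3] at h0
    linarith
  have hd := discrim_le_zero (a := q * c) (b := -(2*q)) (c := a)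
    (fun s => by have := key s; nlinarith [this])
  rw [discrim] at hd
  by_cases hq0 : q = 0
  · rw [hq0]; exact mul_nonneg ha hc
  · have hq' : 0 < q := lt_of_le_of_ne habs (Ne.symm hq0)
    nlinarith [hd, hq']

lemma decompRI (X : H →L[ℂ] H) : X = reP X + Complex.I • imP X := by
  rw [reP, imP, smul_smul]
  have h : Complex.I * (2*Complex.I)⁻¹ = (2:ℂ)⁻¹ := by
    field_simp
  rw [h, ← smul_add]
  have h2 : (X + adjoint X) + (X - adjoint X) = (2:ℂ) • X := by
    ext z
    simp [two_smul]
  rw [h2, smul_smul]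
  norm_num

lemma bddAboveRadius (X : H →L[ℂ] H) :
    BddAbove (Set.range fun x : {x : H // ‖x‖ = 1} => ‖⟪X x.1, x.1⟫_ℂ‖) := by
  refine ⟨‖X‖, ?_⟩
  rintro _ ⟨x, rfl⟩
  calc ‖⟪X x.1, x.1⟫_ℂ‖ ≤ ‖X x.1‖ * ‖x.1‖ := by
        exact norm_inner_le_norm _ _
    _ ≤ ‖X‖ * ‖x.1‖ * ‖x.1‖ := by
        have := X.le_opNorm x.1
        nlinarith [norm_nonneg (x.1)]
    _ = ‖X‖ := by rw [x.2]; ring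

lemma numRadius_nonneg (X : H →L[ℂ] H) : 0 ≤ numRadius X := by
  rcases isEmpty_or_nonempty {x : H // ‖x‖ = 1} with h | h
  · rw [numRadius, Real.iSup_of_isEmpty]
  · obtain ⟨x⟩ := h
    exact le_trans (norm_nonneg _) (le_ciSup (bddAboveRadius X) x)

lemma abs_inner_le_numRadius (X : H →L[ℂ] H) {x : H} (hx : ‖x‖ = 1) :
    ‖⟪X x, x⟫_ℂ‖ ≤ numRadius X :=
  le_ciSup (bddAboveRadius X) (⟨x, hx⟩ : {x : H // ‖x‖ = 1})

lemma le_of_sq_le_sq'' {a b : ℝ} (ha : 0 ≤ a) (hb : 0 ≤ b) (h : a^2 ≤ b^2) : a ≤ b := by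
  calc a = Real.sqrt (a^2) := (Real.sqrt_sq ha).symm
    _ ≤ Real.sqrt (b^2) := Real.sqrt_le_sqrt h
    _ = b := Real.sqrt_sq hb

lemma splitInner (X : H →L[ℂ] H) (u v : H) :
    ⟪X u, v⟫_ℂ = ⟪reP X u, v⟫_ℂ - Complex.I * ⟪imP X u, v⟫_ℂ := by
  conv_lhs => rw [decompRI X]
  simp [inner_add_left, inner_smul_left, Complex.conj_I]
  ring

lemma diag_sum_le (X : H →L[ℂ] H) (h1 : (reP X).IsPositive) (h2 : (imP X).IsPositive)
    {u : H} (hu : ‖u‖ = 1) :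
    (⟪reP X u, u⟫_ℂ).re + (⟪imP X u, u⟫_ℂ).re ≤ Real.sqrt 2 * numRadius X := by
  set a := (⟪reP X u, u⟫_ℂ).re with haa
  set b := (⟪imP X u, u⟫_ℂ).re with hbb
  have ha : 0 ≤ a := h1.re_inner_nonneg_left u
  have hb : 0 ≤ b := h2.re_inner_nonneg_left u
  have hz : ⟪X u, u⟫_ℂ = (a:ℂ) - Complex.I * (b:ℂ) := by
    rw [splitInner, posInnerReal _ h1 u, posInnerReal _ h2 u]
  have habs2 : (‖⟪X u, u⟫_ℂ‖)^2 = a^2 + b^2 := by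
    rw [Complex.sq_norm, hz, Complex.normSq_apply]
    simp
    ring
  have hrad := abs_inner_le_numRadius X hu
  have hrad0 : 0 ≤ ‖⟪X u, u⟫_ℂ‖ := norm_nonneg _
  have hsq : (a + b)^2 ≤ 2 * (numRadius X)^2 := by
    nlinarith [sq_nonneg (a - b), hrad, hrad0, habs2]
  have h0 : 0 ≤ numRadius X := numRadius_nonneg X
  refine le_of_sq_le_sq'' (by linarith) (mul_nonneg (Real.sqrt_nonneg 2) h0) ?_
  rw [mul_pow, Real.sq_sqrt (by norm_num : (0:ℝ) ≤ 2)]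
  exact hsq

lemma inner_bound (X : H →L[ℂ] H) (h1 : (reP X).IsPositive) (h2 : (imP X).IsPositive)
    {x y : H} (hx : ‖x‖ = 1) (hy : ‖y‖ = 1) :
    ‖⟪X x, y⟫_ℂ‖ ≤ Real.sqrt 2 * numRadius X := by
  set ax := (⟪reP X x, x⟫_ℂ).re
  set bx := (⟪imP X x, x⟫_ℂ).re
  set ay := (⟪reP X y, y⟫_ℂ).re
  set by' := (⟪imP X y, y⟫_ℂ).re
  have hax : 0 ≤ ax := h1.re_inner_nonneg_left x
  have hbx : 0 ≤ bx := h2.re_inner_nonneg_left x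
  have hay : 0 ≤ ay := h1.re_inner_nonneg_left y
  have hby : 0 ≤ by' := h2.re_inner_nonneg_left y
  set u1 := ‖⟪reP X x, y⟫_ℂ‖ with hu1d
  set u2 := ‖⟪imP X x, y⟫_ℂ‖ with hu2d
  have hu1 : u1^2 ≤ ax * ay := posCS _ h1 x y
  have hu2 : u2^2 ≤ bx * by' := posCS _ h2 x y
  have hu10 : 0 ≤ u1 := norm_nonneg _
  have hu20 : 0 ≤ u2 := norm_nonneg _
  set t := ‖⟪X x, y⟫_ℂ‖ with htd
  have ht0 : 0 ≤ t := norm_nonneg _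
  have htle : t ≤ u1 + u2 := by
    rw [htd, splitInner]
    rw [sub_eq_add_neg]
    refine (norm_add_le _ _).trans ?_
    rw [norm_neg, norm_mul]
    simp
    exact le_rfl
  have m1 : (u1*u2)^2 ≤ (ax*ay)*(bx*by') := by
    rw [mul_pow]
    exact mul_le_mul hu1 hu2 (sq_nonneg u2) (mul_nonneg hax hay)
  have m2 : 2*(u1*u2) ≤ ax*by' + ay*bx := by
    refine le_of_sq_le_sq'' (by positivity) (by positivity) ?_
    nlinarith [m1, sq_nonneg (ax*by' - ay*bx)]
  have m3 : t^2 ≤ (ax+bx)*(ay+by') := by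
    nlinarith [htle, ht0, hu1, hu2, m2, hu10, hu20]
  have dx := diag_sum_le X h1 h2 hx
  have dy := diag_sum_le X h1 h2 hy
  have hs0 : 0 ≤ Real.sqrt 2 * numRadius X :=
    mul_nonneg (Real.sqrt_nonneg 2) (numRadius_nonneg X)
  have m4 : t^2 ≤ (Real.sqrt 2 * numRadius X)^2 := by
    nlinarith [m3, dx, dy, hax, hbx, hay, hby, hs0]
  exact le_of_sq_le_sq'' ht0 hs0 m4

lemma norm_le_sqrt2_numRadius (X : H →L[ℂ] H)
    (h1 : (reP X).IsPositive) (h2 : (imP X).IsPositive) :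
    ‖X‖ ≤ Real.sqrt 2 * numRadius X := by
  have hs0 : 0 ≤ Real.sqrt 2 * numRadius X :=
    mul_nonneg (Real.sqrt_nonneg 2) (numRadius_nonneg X)
  refine X.opNorm_le_bound hs0 (fun x => ?_)
  rcases eq_or_ne x 0 with rfl | hx0
  · simp
  · have hnx : ‖x‖ ≠ 0 := norm_ne_zero_iff.mpr hx0
    set u : H := ((‖x‖⁻¹ : ℝ) : ℂ) • x with hud
    have hu : ‖u‖ = 1 := by
      rw [hud, norm_smul, Complex.norm_real, Real.norm_eq_abs,
        abs_of_nonneg (inv_nonneg.mpr (norm_nonneg x)), inv_mul_cancel₀ hnx]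
    have hXu : ‖X u‖ = ‖x‖⁻¹ * ‖X x‖ := by
      rw [hud, map_smul, norm_smul, Complex.norm_real, Real.norm_eq_abs,
        abs_of_nonneg (inv_nonneg.mpr (norm_nonneg x))]
    have hXx : ‖X x‖ = ‖x‖ * ‖X u‖ := by
      rw [hXu, ← mul_assoc, mul_inv_cancel₀ hnx, one_mul]
    rw [hXx, mul_comm (Real.sqrt 2 * numRadius X) ‖x‖]
    refine mul_le_mul_of_nonneg_left ?_ (norm_nonneg x)
    rcases eq_or_ne (X u) 0 with h | h
    · rw [h]; simpa using hs0
    · have hnXu : ‖X u‖ ≠ 0 := norm_ne_zero_iff.mpr h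
      set v : H := ((‖X u‖⁻¹ : ℝ) : ℂ) • X u with hvd
      have hv : ‖v‖ = 1 := by
        rw [hvd, norm_smul, Complex.norm_real, Real.norm_eq_abs,
          abs_of_nonneg (inv_nonneg.mpr (norm_nonneg (X u))), inv_mul_cancel₀ hnXu]
      have hinner : ‖⟪X u, v⟫_ℂ‖ = ‖X u‖ := by
        rw [hvd, inner_smul_right, inner_self_eq_norm_sq_to_K, norm_mul, norm_pow]
        simp [abs_of_nonneg (inv_nonneg.mpr (norm_nonneg (X u))),
          abs_of_nonneg (norm_nonneg (X u))]
        rw [sq, ← mul_assoc, inv_mul_cancel₀ hnXu, one_mul]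
      rw [← hinner]
      exact inner_bound X h1 h2 hu hv

theorem stmt_11 (S T : H →L[ℂ] H) (hS1 : (reP S).IsPositive) (hS2 : (imP S).IsPositive)
    (hT1 : (reP T).IsPositive) (hT2 : (imP T).IsPositive) :
    numRadius (S * T) ≤ 2 * numRadius S * numRadius T := by
  have hST : numRadius (S * T) ≤ ‖S * T‖ := by
    refine Real.iSup_le (fun x => ?_) (norm_nonneg _)
    calc ‖⟪(S * T) x.1, x.1⟫_ℂ‖ ≤ ‖(S * T) x.1‖ * ‖x.1‖ := by
          exact norm_inner_le_norm _ _
      _ ≤ ‖S * T‖ * ‖x.1‖ * ‖x.1‖ := by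
          have := (S * T).le_opNorm x.1
          nlinarith [norm_nonneg (x.1)]
      _ = ‖S * T‖ := by rw [x.2]; ring
  have hmul : ‖S * T‖ ≤ ‖S‖ * ‖T‖ := norm_mul_le S T
  have hS := norm_le_sqrt2_numRadius S hS1 hS2
  have hT := norm_le_sqrt2_numRadius T hT1 hT2
  have h2 : Real.sqrt 2 * Real.sqrt 2 = 2 := Real.mul_self_sqrt (by norm_num)
  have key : ‖S‖ * ‖T‖ ≤ 2 * numRadius S * numRadius T := by
    calc ‖S‖ * ‖T‖ ≤ (Real.sqrt 2 * numRadius S) * (Real.sqrt 2 * numRadius T) :=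
          mul_le_mul hS hT (norm_nonneg T)
            (mul_nonneg (Real.sqrt_nonneg 2) (numRadius_nonneg S))
      _ = (Real.sqrt 2 * Real.sqrt 2) * (numRadius S * numRadius T) := by ring
      _ = 2 * numRadius S * numRadius T := by rw [h2]; ring
  linarith
end

section
/- If A and B are bounded self-adjoint operators on a complex Hilbert space, then ‖A + B‖² ≤ ω(A + iB)² + 2‖A‖‖B‖. -/
open scoped InnerProductSpace
open ContinuousLinearMap

variable {H : Type*} [NormedAddCommGroup H] [InnerProductSpace ℂ H] [CompleteSpace H]

lemma polar_re (T : H →L[ℂ] H) (hT : IsSelfAdjoint T) (x y : H) :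
    4 * (⟪T x, y⟫_ℂ).re = (⟪T (x + y), x + y⟫_ℂ).re - (⟪T (x - y), x - y⟫_ℂ).re := by
  have hsym : ⟪T y, x⟫_ℂ = starRingEnd ℂ ⟪T x, y⟫_ℂ := by
    rw [← hT.adjoint_eq, adjoint_inner_left, ← inner_conj_symm]
    rw [hT.adjoint_eq]
  have e1 : ⟪T (x + y), x + y⟫_ℂ = ⟪T x, x⟫_ℂ + ⟪T x, y⟫_ℂ + ⟪T y, x⟫_ℂ + ⟪T y, y⟫_ℂ := by
    rw [map_add, inner_add_left, inner_add_right, inner_add_right]; ring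
  have e2 : ⟪T (x - y), x - y⟫_ℂ = ⟪T x, x⟫_ℂ - ⟪T x, y⟫_ℂ - ⟪T y, x⟫_ℂ + ⟪T y, y⟫_ℂ := by
    rw [map_sub, inner_sub_left, inner_sub_right, inner_sub_right]; ring
  rw [e1, e2, hsym]
  simp only [Complex.add_re, Complex.sub_re, Complex.conj_re]
  ring

lemma sa_norm_le (T : H →L[ℂ] H) (hT : IsSelfAdjoint T) (M : ℝ) (hM : 0 ≤ M)
    (h : ∀ x : H, ‖x‖ = 1 → |(⟪T x, x⟫_ℂ).re| ≤ M) : ‖T‖ ≤ M := by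
  have hhom : ∀ x : H, |(⟪T x, x⟫_ℂ).re| ≤ M * ‖x‖ ^ 2 := by
    intro x
    rcases eq_or_ne x 0 with rfl | hx
    · simp
    · have hxn : (0:ℝ) < ‖x‖ := norm_pos_iff.mpr hx
      set c : ℂ := ((‖x‖⁻¹ : ℝ) : ℂ) with hc
      have hu : ‖c • x‖ = 1 := by
        rw [norm_smul, hc, Complex.norm_real, Real.norm_eq_abs,
          abs_of_nonneg (by positivity)]
        field_simp
      have := h _ hu
      have hexp : ⟪T (c • x), c • x⟫_ℂ = ((‖x‖⁻¹ ^ 2 : ℝ) : ℂ) * ⟪T x, x⟫_ℂ := by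
        rw [map_smul, inner_smul_left, inner_smul_right, hc, Complex.conj_ofReal]
        push_cast
        ring
      rw [hexp] at this
      have h2 : ‖x‖⁻¹ ^ 2 * |(⟪T x, x⟫_ℂ).re| ≤ M := by
        have := this
        rw [Complex.re_ofReal_mul] at this
        rwa [abs_mul, abs_of_nonneg (by positivity)] at this
      calc |(⟪T x, x⟫_ℂ).re| = ‖x‖^2 * (‖x‖⁻¹ ^ 2 * |(⟪T x, x⟫_ℂ).re|) := by
            field_simp
        _ ≤ ‖x‖^2 * M := mul_le_mul_of_nonneg_left h2 (by positivity)
        _ = M * ‖x‖^2 := by ring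
  refine T.opNorm_le_bound hM fun x => ?_
  rcases eq_or_ne (T x) 0 with hTx | hTx
  · simp [hTx]; positivity
  · have hx : x ≠ 0 := by rintro rfl; simp at hTx
    have hxn : (0:ℝ) < ‖x‖ := norm_pos_iff.mpr hx
    have hTxn : (0:ℝ) < ‖T x‖ := norm_pos_iff.mpr hTx
    set y : H := ((‖x‖ / ‖T x‖ : ℝ) : ℂ) • T x with hy
    have hyn : ‖y‖ = ‖x‖ := by
      rw [hy, norm_smul, Complex.norm_real, Real.norm_eq_abs,
        abs_of_nonneg (by positivity)]
      field_simp
    have hre : (⟪T x, y⟫_ℂ).re = ‖x‖ * ‖T x‖ := by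
      rw [hy, inner_smul_right]
      have h1 : ⟪T x, T x⟫_ℂ = ((‖T x‖ ^ 2 : ℝ) : ℂ) := by
        rw [inner_self_eq_norm_sq_to_K]; norm_cast
      rw [h1, ← Complex.ofReal_mul, Complex.ofReal_re]
      field_simp
    have hp := polar_re T hT x y
    have hb1 := hhom (x + y)
    have hb2 := hhom (x - y)
    have hpar : ‖x + y‖ ^ 2 + ‖x - y‖ ^ 2 = 2 * (‖x‖ ^ 2 + ‖y‖ ^ 2) := by
      have := parallelogram_law_with_norm ℂ x y
      nlinarith [this]
    have key : 4 * (‖x‖ * ‖T x‖) ≤ M * (‖x + y‖^2) + M * (‖x - y‖^2) := by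
      rw [← hre, show (4:ℝ) * (⟪T x, y⟫_ℂ).re = 4 * (⟪T x, y⟫_ℂ).re from rfl]
      have h4 : 4 * (⟪T x, y⟫_ℂ).re
          = (⟪T (x + y), x + y⟫_ℂ).re - (⟪T (x - y), x - y⟫_ℂ).re := hp
      linarith [(abs_le.mp hb1).2, (abs_le.mp hb2).1]
    have hfin : 4 * (‖x‖ * ‖T x‖) ≤ 4 * (M * ‖x‖ ^ 2) := by
      calc 4 * (‖x‖ * ‖T x‖) ≤ M * (‖x + y‖^2) + M * (‖x - y‖^2) := key
        _ = M * (‖x + y‖^2 + ‖x - y‖^2) := by ring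
        _ = M * (2 * (‖x‖^2 + ‖y‖^2)) := by rw [hpar]
        _ = 4 * (M * ‖x‖^2) := by rw [hyn]; ring
    nlinarith [hxn]

theorem stmt_15 (A B : H →L[ℂ] H) (hA : IsSelfAdjoint A) (hB : IsSelfAdjoint B) :
    ‖A + B‖ ^ 2 ≤ numRadius (A + Complex.I • B) ^ 2 + 2 * ‖A‖ * ‖B‖ := by
  set M := numRadius (A + Complex.I • B) with hM
  have hM0 : 0 ≤ M := Real.iSup_nonneg fun x => norm_nonneg _
  have himA : ∀ x : H, (⟪A x, x⟫_ℂ).im = 0 := by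
    intro x
    have h1 : starRingEnd ℂ ⟪A x, x⟫_ℂ = ⟪A x, x⟫_ℂ := by
      rw [inner_conj_symm]
      exact (hA.isSymmetric x x).symm
    exact Complex.conj_eq_iff_im.mp h1
  have himB : ∀ x : H, (⟪B x, x⟫_ℂ).im = 0 := by
    intro x
    have h1 : starRingEnd ℂ ⟪B x, x⟫_ℂ = ⟪B x, x⟫_ℂ := by
      rw [inner_conj_symm]
      exact (hB.isSymmetric x x).symm
    exact Complex.conj_eq_iff_im.mp h1
  -- bound on sum of squares at unit vectors
  have hbdd : BddAbove (Set.range fun x : {x : H // ‖x‖ = 1} =>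
      ‖⟪(A + Complex.I • B) x.1, x.1⟫_ℂ‖) := by
    refine ⟨‖A + Complex.I • B‖, ?_⟩
    rintro _ ⟨x, rfl⟩
    calc ‖⟪(A + Complex.I • B) x.1, x.1⟫_ℂ‖
        = ‖⟪(A + Complex.I • B) x.1, x.1⟫_ℂ‖ := rfl
      _ ≤ ‖(A + Complex.I • B) x.1‖ * ‖x.1‖ := norm_inner_le_norm _ _
      _ ≤ (‖A + Complex.I • B‖ * ‖x.1‖) * ‖x.1‖ := by
          gcongr; exact le_opNorm _ _
      _ = ‖A + Complex.I • B‖ := by rw [x.2]; ring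
  have hkey : ∀ x : H, ‖x‖ = 1 →
      (⟪A x, x⟫_ℂ).re ^ 2 + (⟪B x, x⟫_ℂ).re ^ 2 ≤ M ^ 2 := by
    intro x hx
    have hle : ‖⟪(A + Complex.I • B) x, x⟫_ℂ‖ ≤ M :=
      le_ciSup hbdd (⟨x, hx⟩ : {x : H // ‖x‖ = 1})
    have hz : ⟪(A + Complex.I • B) x, x⟫_ℂ
        = ⟪A x, x⟫_ℂ + (starRingEnd ℂ Complex.I) * ⟪B x, x⟫_ℂ := by
      simp [ContinuousLinearMap.add_apply, ContinuousLinearMap.smul_apply,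
        inner_add_left, inner_smul_left]
      ring
    have hsq : (‖⟪(A + Complex.I • B) x, x⟫_ℂ‖) ^ 2
        = (⟪A x, x⟫_ℂ).re ^ 2 + (⟪B x, x⟫_ℂ).re ^ 2 := by
      rw [Complex.sq_norm, Complex.normSq_apply, hz]
      simp [Complex.add_re, Complex.add_im, Complex.mul_re, Complex.mul_im,
        himA x, himB x]
      ring
    nlinarith [norm_nonneg ⟪(A + Complex.I • B) x, x⟫_ℂ]
  have hAb : ∀ x : H, ‖x‖ = 1 → |(⟪A x, x⟫_ℂ).re| ≤ ‖A‖ := by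
    intro x hx
    calc |(⟪A x, x⟫_ℂ).re| ≤ ‖⟪A x, x⟫_ℂ‖ := Complex.abs_re_le_norm _
      _ = ‖⟪A x, x⟫_ℂ‖ := rfl
      _ ≤ ‖A x‖ * ‖x‖ := norm_inner_le_norm _ _
      _ ≤ (‖A‖ * ‖x‖) * ‖x‖ := by gcongr; exact le_opNorm _ _
      _ = ‖A‖ := by rw [hx]; ring
  have hBb : ∀ x : H, ‖x‖ = 1 → |(⟪B x, x⟫_ℂ).re| ≤ ‖B‖ := by
    intro x hx
    calc |(⟪B x, x⟫_ℂ).re| ≤ ‖⟪B x, x⟫_ℂ‖ := Complex.abs_re_le_norm _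
      _ = ‖⟪B x, x⟫_ℂ‖ := rfl
      _ ≤ ‖B x‖ * ‖x‖ := norm_inner_le_norm _ _
      _ ≤ (‖B‖ * ‖x‖) * ‖x‖ := by gcongr; exact le_opNorm _ _
      _ = ‖B‖ := by rw [hx]; ring
  set C : ℝ := Real.sqrt (M ^ 2 + 2 * ‖A‖ * ‖B‖) with hC
  have hC0 : 0 ≤ C := Real.sqrt_nonneg _
  have hnorm : ‖A + B‖ ≤ C := by
    refine sa_norm_le (A + B) (hA.add hB) C hC0 fun x hx => ?_
    have h1 : (⟪(A + B) x, x⟫_ℂ).re = (⟪A x, x⟫_ℂ).re + (⟪B x, x⟫_ℂ).re := by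
      simp [ContinuousLinearMap.add_apply, inner_add_left]
    rw [h1, ← Real.sqrt_sq_eq_abs]
    apply Real.sqrt_le_sqrt
    nlinarith [hkey x hx, hAb x hx, hBb x hx, abs_nonneg ((⟪A x, x⟫_ℂ).re),
      abs_mul_abs_self ((⟪A x, x⟫_ℂ).re), abs_mul_abs_self ((⟪B x, x⟫_ℂ).re),
      mul_le_mul (hAb x hx) (hBb x hx) (abs_nonneg _) (norm_nonneg A),
      le_abs_self ((⟪A x, x⟫_ℂ).re * (⟪B x, x⟫_ℂ).re), abs_mul ((⟪A x, x⟫_ℂ).re) ((⟪B x, x⟫_ℂ).re)]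
  calc ‖A + B‖ ^ 2 ≤ C ^ 2 := by gcongr
    _ = M ^ 2 + 2 * ‖A‖ * ‖B‖ := Real.sq_sqrt (by positivity)
end
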